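/- Dummy position lemma: given sets H₁,...,H_n ⊆ {1,...,n} and linear order constraints between some pairs of consecutive positions, insert after position i a new position with allowed set {c}, where c is a fresh value larger (in the relevant constraint orders) than all values allowed at position i and smaller than all values allowed at the old position i+1, and impose the order constraints i ≺ new and new ≺ (old i+1). Then the new instance (on n+1 positions and n+1 values) has a solution if and only if the original instance with NO order constraint between positions i and i+1 has a solution. -/
import Mathlib


/-- Dummy position lemma: an instance with allowed sets H₁,...,H_n ⊆ {1,...,n}
and order constraints r_p for positions p ∈ P (with no constraint between
positions i and i+1, i.e. i ∉ P) has a solution iff the instance obtained by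
inserting after position i a new position with allowed set {n+1} (n+1 being a
fresh value, made largest in the order constraining positions (i, new) and
smallest in the order constraining positions (new, old i+1)) has a solution. -/
theorem stmt_17 (n : ℕ) (hn : 1 ≤ n)
    (H : ℕ → Finset ℕ) (hH : ∀ p, H p ⊆ Finset.Icc 1 n)
    (P : Finset ℕ) (hP : ∀ p ∈ P, 1 ≤ p ∧ p + 1 ≤ n)
    (r : ℕ → ℕ → ℕ → Prop)
    (i : ℕ) (hi1 : 1 ≤ i) (hi2 : i + 1 ≤ n) (hiP : i ∉ P) :
    -- order for the pair (i, new): n+1 is the largest value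
    let r₁ : ℕ → ℕ → Prop := fun x y =>
      (y = n + 1 ∧ x ≠ n + 1) ∨ (x ≠ n + 1 ∧ y ≠ n + 1 ∧ x < y)
    -- order for the pair (new, old i+1): n+1 is the smallest value
    let r₂ : ℕ → ℕ → Prop := fun x y =>
      (x = n + 1 ∧ y ≠ n + 1) ∨ (x ≠ n + 1 ∧ y ≠ n + 1 ∧ x < y)
    ((∃ π : ℕ → ℕ, Set.BijOn π (Set.Icc 1 (n + 1)) (Set.Icc 1 (n + 1)) ∧
        (∀ p, 1 ≤ p → p ≤ i → π p ∈ H p) ∧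
        π (i + 1) = n + 1 ∧
        (∀ p, i + 2 ≤ p → p ≤ n + 1 → π p ∈ H (p - 1)) ∧
        (∀ p ∈ P, p < i → r p (π p) (π (p + 1))) ∧
        (∀ p ∈ P, i < p → r p (π (p + 1)) (π (p + 2))) ∧
        r₁ (π i) (π (i + 1)) ∧ r₂ (π (i + 1)) (π (i + 2))) ↔
      (∃ π : ℕ → ℕ, Set.BijOn π (Set.Icc 1 n) (Set.Icc 1 n) ∧
        (∀ p, 1 ≤ p → p ≤ n → π p ∈ H p) ∧
        (∀ p ∈ P, r p (π p) (π (p + 1))))) := by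
  intro r₁ r₂
  constructor
  · rintro ⟨π, hb, hle, hnew, hgt, hrlt, hrgt, -, -⟩
    refine ⟨fun p => if p ≤ i then π p else π (p + 1), ?_, ?_, ?_⟩
    · refine ⟨?_, ?_, ?_⟩
      · intro p hp
        simp only [Set.mem_Icc] at hp ⊢
        have hq : (if p ≤ i then p else p + 1) ∈ Set.Icc 1 (n + 1) := by
          simp only [Set.mem_Icc]; split <;> omega
        have h1 := hb.mapsTo hq
        simp only [Set.mem_Icc] at h1
        have hne : π (if p ≤ i then p else p + 1) ≠ n + 1 := by
          intro h
          have : (if p ≤ i then p else p + 1) = i + 1 := by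
            apply hb.injOn hq (by simp only [Set.mem_Icc]; omega)
            rw [h, hnew]
          split at this <;> omega
        split <;> split at hne <;> split at h1 <;> omega
      · intro p hp q hq hpq
        simp only [Set.mem_Icc] at hp hq
        simp only [] at hpq
        rw [← apply_ite π, ← apply_ite π] at hpq
        have hp' : (if p ≤ i then p else p + 1) ∈ Set.Icc 1 (n + 1) := by
          simp only [Set.mem_Icc]; split <;> omega
        have hq' : (if q ≤ i then q else q + 1) ∈ Set.Icc 1 (n + 1) := by
          simp only [Set.mem_Icc]; split <;> omega
        have := hb.injOn hp' hq' hpq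
        split at this <;> split at this <;> omega
      · intro y hy
        simp only [Set.mem_Icc] at hy
        obtain ⟨x, hx, hxy⟩ := hb.surjOn (show y ∈ Set.Icc 1 (n+1) by simp only [Set.mem_Icc]; omega)
        simp only [Set.mem_Icc] at hx
        have hxne : x ≠ i + 1 := by
          intro h; rw [h, hnew] at hxy; omega
        by_cases hxi : x ≤ i
        · exact ⟨x, by simp only [Set.mem_Icc]; omega, by simp only [if_pos hxi]; exact hxy⟩
        · refine ⟨x - 1, by simp only [Set.mem_Icc]; omega, ?_⟩
          have : ¬ (x - 1 ≤ i) := by omega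
          simp only [if_neg this]
          have : x - 1 + 1 = x := by omega
          rw [this]; exact hxy
    · intro p hp1 hp2
      by_cases hpi : p ≤ i
      · simp only [if_pos hpi]; exact hle p hp1 hpi
      · simp only [if_neg hpi]
        have := hgt (p + 1) (by omega) (by omega)
        simpa using this
    · intro p hpP
      have hpb := hP p hpP
      have hpi : p ≠ i := fun h => hiP (h ▸ hpP)
      rcases lt_or_gt_of_ne hpi with h | h
      · have h1 : p ≤ i := by omega
        have h2 : p + 1 ≤ i := by omega
        simp only [if_pos h1, if_pos h2]
        exact hrlt p hpP h
      · have h1 : ¬ p ≤ i := by omega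
        have h2 : ¬ p + 1 ≤ i := by omega
        simp only [if_neg h1, if_neg h2]
        exact hrgt p hpP h
  · rintro ⟨σ, hb, hmem, hr⟩
    have hσIcc : ∀ p, 1 ≤ p → p ≤ n → 1 ≤ σ p ∧ σ p ≤ n := by
      intro p h1 h2
      have := hb.mapsTo (show p ∈ Set.Icc 1 n by simp only [Set.mem_Icc]; omega)
      simpa using this
    refine ⟨fun p => if p ≤ i then σ p else if p = i + 1 then n + 1 else σ (p - 1),
      ⟨?_, ?_, ?_⟩, ?_, ?_, ?_, ?_, ?_, ?_, ?_⟩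
    · intro p hp
      simp only [Set.mem_Icc] at hp ⊢
      split
      · have := hσIcc p (by omega) (by omega); omega
      · split
        · omega
        · have := hσIcc (p - 1) (by omega) (by omega); omega
    · intro p hp q hq hpq
      simp only [Set.mem_Icc] at hp hq
      simp only [] at hpq
      have key : ∀ a b, 1 ≤ a → a ≤ n → 1 ≤ b → b ≤ n → σ a = σ b → a = b := by
        intro a b h1 h2 h3 h4 h
        exact hb.injOn (by simp only [Set.mem_Icc]; omega)
          (by simp only [Set.mem_Icc]; omega) h
      by_cases hp1 : p ≤ i <;> by_cases hq1 : q ≤ i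
      · rw [if_pos hp1, if_pos hq1] at hpq
        exact key p q (by omega) (by omega) (by omega) (by omega) hpq
      · rw [if_pos hp1, if_neg hq1] at hpq
        by_cases hq2 : q = i + 1
        · rw [if_pos hq2] at hpq
          have := hσIcc p (by omega) (by omega); omega
        · rw [if_neg hq2] at hpq
          have := key p (q - 1) (by omega) (by omega) (by omega) (by omega) hpq; omega
      · rw [if_neg hp1, if_pos hq1] at hpq
        by_cases hp2 : p = i + 1
        · rw [if_pos hp2] at hpq
          have := hσIcc q (by omega) (by omega); omega
        · rw [if_neg hp2] at hpq
          have := key (p - 1) q (by omega) (by omega) (by omega) (by omega) hpq; omega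
      · rw [if_neg hp1, if_neg hq1] at hpq
        by_cases hp2 : p = i + 1 <;> by_cases hq2 : q = i + 1
        · omega
        · rw [if_pos hp2, if_neg hq2] at hpq
          have := hσIcc (q - 1) (by omega) (by omega); omega
        · rw [if_neg hp2, if_pos hq2] at hpq
          have := hσIcc (p - 1) (by omega) (by omega); omega
        · rw [if_neg hp2, if_neg hq2] at hpq
          have := key (p - 1) (q - 1) (by omega) (by omega) (by omega) (by omega) hpq
          omega
    · intro y hy
      simp only [Set.mem_Icc] at hy
      by_cases hyn : y = n + 1
      · refine ⟨i + 1, by simp only [Set.mem_Icc]; omega, ?_⟩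
        have h1 : ¬ (i + 1 ≤ i) := by omega
        simp only []
        rw [if_neg h1]; simp only [if_true]; omega
      · obtain ⟨x, hx, hxy⟩ := hb.surjOn (a := y) (by simp only [Set.mem_Icc]; omega)
        simp only [Set.mem_Icc] at hx
        by_cases hxi : x ≤ i
        · exact ⟨x, by simp only [Set.mem_Icc]; omega, by simp only [if_pos hxi]; exact hxy⟩
        · refine ⟨x + 1, by simp only [Set.mem_Icc]; omega, ?_⟩
          have h1 : ¬ (x + 1 ≤ i) := by omega
          have h2 : x + 1 ≠ i + 1 := by omega
          simp only [if_neg h1, if_neg h2, Nat.add_sub_cancel]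
          exact hxy
    · intro p hp1 hp2
      simp only [if_pos hp2]
      exact hmem p hp1 (by omega)
    · have h1 : ¬ (i + 1 ≤ i) := by omega
      simp only []
      rw [if_neg h1]; simp only [if_true]
    · intro p hp1 hp2
      have h1 : ¬ (p ≤ i) := by omega
      have h2 : p ≠ i + 1 := by omega
      simp only [if_neg h1, if_neg h2]
      exact hmem (p - 1) (by omega) (by omega)
    · intro p hpP hpi
      have hpb := hP p hpP
      have h1 : p ≤ i := by omega
      have h2 : p + 1 ≤ i := by omega
      simp only [if_pos h1, if_pos h2]
      exact hr p hpP
    · intro p hpP hpi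
      have hpb := hP p hpP
      have h1 : ¬ (p + 1 ≤ i) := by omega
      have h2 : p + 1 ≠ i + 1 := by omega
      have h3 : ¬ (p + 2 ≤ i) := by omega
      have h4 : p + 2 ≠ i + 1 := by omega
      simp only [if_neg h1, if_neg h2, if_neg h3, if_neg h4, Nat.add_sub_cancel]
      have : p + 2 - 1 = p + 1 := by omega
      rw [this]
      exact hr p hpP
    · have h1 : ¬ (i + 1 ≤ i) := by omega
      simp only [r₁]
      rw [if_pos (le_refl i), if_neg h1]
      simp only [if_true]
      left
      have := hσIcc i hi1 (by omega)
      exact ⟨by simp, by omega⟩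
    · have h1 : ¬ (i + 1 ≤ i) := by omega
      have h2 : ¬ (i + 2 ≤ i) := by omega
      have h3 : i + 2 ≠ i + 1 := by omega
      simp only [r₂]
      rw [if_neg h1, if_neg h2, if_neg h3, show i + 2 - 1 = i + 1 from rfl]
      simp only [if_true]
      left
      have := hσIcc (i + 1) (by omega) (by omega)
      exact ⟨by simp, by omega⟩
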